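/- Let (T_n) be a sequence of Schwartz operators on L²(ℝ^N) that is Cauchy with respect to every seminorm ‖·‖_{α,α',β,β'} (α, α', β, β' ∈ ℕ^N). Then there exists a Schwartz operator T such that ‖T − T_n‖_{α,α',β,β'} → 0 for every α, α', β, β' ∈ ℕ^N. In other words, the space S(H) of Schwartz operators is complete (a Fréchet space) for the topology generated by these countably many seminorms. -/

import Mathlib

open MeasureTheory SchwartzMap Complex Pointwise Convolution

noncomputable section

/-- Configuration space ℝ^N. -/
abbrev Cfg (N : ℕ) := EuclideanSpace ℝ (Fin N)

/-- The Hilbert space L²(ℝ^N). -/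
abbrev L2 (N : ℕ) := MeasureTheory.Lp ℂ 2 (volume : Measure (Cfg N))

theorem schwartz_memL2 {N : ℕ} (f : 𝓢(Cfg N, ℂ)) :
    MeasureTheory.MemLp (⇑f) 2 (volume : Measure (Cfg N)) := by
  rw [MeasureTheory.memLp_two_iff_integrable_sq_norm f.continuous.aestronglyMeasurable]
  have h1 : MeasureTheory.Integrable (fun x => (SchwartzMap.seminorm ℝ 0 0 f) * ‖f x‖) volume :=
    f.integrable.norm.const_mul _
  refine h1.mono ((f.continuous.norm.pow 2).aestronglyMeasurable) ?_
  refine Filter.Eventually.of_forall fun x => ?_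
  have h2 := SchwartzMap.norm_le_seminorm ℝ f x
  have h3 : ‖f x‖ ^ 2 ≤ (SchwartzMap.seminorm ℝ 0 0 f) * ‖f x‖ := by
    rw [sq]; exact mul_le_mul_of_nonneg_right h2 (norm_nonneg _)
  calc ‖‖f x‖ ^ 2‖ = ‖f x‖ ^ 2 := by rw [Real.norm_of_nonneg (by positivity)]
    _ ≤ (SchwartzMap.seminorm ℝ 0 0 f) * ‖f x‖ := h3
    _ ≤ ‖(SchwartzMap.seminorm ℝ 0 0 f) * ‖f x‖‖ := le_abs_self _

/-- Embedding of Schwartz functions into L². -/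
def toL2 {N : ℕ} (f : 𝓢(Cfg N, ℂ)) : L2 N := (schwartz_memL2 f).toLp ⇑f

def schwartzOfCS {N : ℕ} (f : Cfg N → ℂ) (hf : ContDiff ℝ ((⊤ : ℕ∞) : WithTop ℕ∞) f)
    (h : HasCompactSupport f) : 𝓢(Cfg N, ℂ) where
  toFun := f
  smooth' := hf
  decay' := by
    intro k n
    have h1 : HasCompactSupport (fun x : Cfg N => ‖x‖ ^ k * ‖iteratedFDeriv ℝ n f x‖) := by
      apply HasCompactSupport.mul_left
      exact (h.iteratedFDeriv n).norm
    have hc : Continuous fun x : Cfg N => ‖x‖ ^ k * ‖iteratedFDeriv ℝ n f x‖ :=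
      (continuous_norm.pow k).mul (hf.continuous_iteratedFDeriv (mod_cast le_top)).norm
    obtain ⟨C, hC⟩ := hc.bounded_above_of_compact_support h1
    exact ⟨C, fun x => (le_abs_self _).trans (hC x)⟩

@[simp] lemma schwartzOfCS_coe {N : ℕ} (f : Cfg N → ℂ) (hf : ContDiff ℝ ((⊤ : ℕ∞) : WithTop ℕ∞) f)
    (h : HasCompactSupport f) : ⇑(schwartzOfCS f hf h) = f := rfl

lemma exists_schwartz_close {N : ℕ} (f : L2 N) {ε : ℝ} (hε : 0 < ε) :
    ∃ ψ : 𝓢(Cfg N, ℂ), ‖f - toL2 ψ‖ ≤ ε := by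
  have hf2 : MemLp (⇑f) 2 (volume : Measure (Cfg N)) := Lp.memLp f
  -- step 1 : continuous compactly supported approximation
  obtain ⟨g, gsupp, hfg, gcont, gmem⟩ := hf2.exists_hasCompactSupport_eLpNorm_sub_le
    (by norm_num : (2:ENNReal) ≠ ⊤) (ε := ENNReal.ofReal (ε/2))
    (by simp [ENNReal.ofReal_eq_zero]; linarith)
  -- the compact set containing all supports
  set K : Set (Cfg N) := tsupport g + Metric.closedBall (0 : Cfg N) 1 with hK
  have hKcomp : IsCompact K := IsCompact.add gsupp (isCompact_closedBall (0 : Cfg N) 1)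
  have hKvol : volume K ≠ ⊤ := hKcomp.measure_ne_top
  set c : ENNReal := (volume K) ^ (1/(2:ℝ)) with hc
  have hcne : c ≠ ⊤ := by
    simp [hc, ENNReal.rpow_eq_top_iff, hKvol]
  -- choose the uniform closeness parameter
  set η : ℝ := (ε/2) / (c.toReal + 1) with hη
  have hη0 : 0 < η := by
    apply div_pos (by linarith)
    have := ENNReal.toReal_nonneg (a := c)
    linarith
  -- uniform continuity of g
  have gu : UniformContinuous g := gsupp.uniformContinuous_of_continuous gcont
  obtain ⟨δ, hδ0, hδ⟩ := Metric.uniformContinuous_iff.mp gu η hη0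
  set δ' : ℝ := min δ 1 with hδ'def
  have hδ'0 : 0 < δ' := lt_min hδ0 one_pos
  -- the bump function and the smooth approximation h
  set φb : ContDiffBump (0 : Cfg N) := ⟨δ'/2, δ', by positivity, half_lt_self hδ'0⟩ with hφb
  set h : Cfg N → ℂ := (φb.normed volume) ⋆[(ContinuousLinearMap.lsmul ℝ ℝ : ℝ →L[ℝ] ℂ →L[ℝ] ℂ), volume] g with hh
  have hsmooth : ContDiff ℝ ((⊤ : ℕ∞) : WithTop ℕ∞) h :=
    HasCompactSupport.contDiff_convolution_left
      (L := (ContinuousLinearMap.lsmul ℝ ℝ : ℝ →L[ℝ] ℂ →L[ℝ] ℂ))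
      φb.hasCompactSupport_normed φb.contDiff_normed (gcont.locallyIntegrable)
  have hsupp : HasCompactSupport h :=
    HasCompactSupport.convolution
      (L := (ContinuousLinearMap.lsmul ℝ ℝ : ℝ →L[ℝ] ℂ →L[ℝ] ℂ))
      φb.hasCompactSupport_normed gsupp
  have hclose : ∀ x, dist (h x) (g x) ≤ η := by
    intro x
    apply ContDiffBump.dist_normed_convolution_le gcont.aestronglyMeasurable
    intro y hy
    have : dist y x < δ := lt_of_lt_of_le (Metric.mem_ball.mp hy) (min_le_left _ _)
    exact (hδ this).le
  -- support of h is inside K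
  have hsubK : Function.support h ⊆ K := by
    have h1 : Function.support h ⊆ Function.support (φb.normed volume) + Function.support g :=
      support_convolution_subset _
    rw [φb.support_normed_eq] at h1
    refine h1.trans ?_
    rw [hK, add_comm (tsupport g)]
    apply Set.add_subset_add
    · intro z hz
      have hz' : dist z 0 < δ' := by simpa [hφb] using hz
      exact Metric.mem_closedBall.mpr (hz'.le.trans (min_le_right δ 1))
    · exact subset_tsupport g
  have hgsubK : Function.support g ⊆ K := by
    intro x hx
    have : x + 0 ∈ tsupport g + Metric.closedBall (0 : Cfg N) 1 :=
      Set.add_mem_add (subset_tsupport g hx) (Metric.mem_closedBall_self zero_le_one)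
    simpa using this
  -- pointwise bound on g - h
  have hpt : ∀ x, ‖(g - h) x‖ ≤ ‖K.indicator (fun _ => η) x‖ := by
    intro x
    by_cases hx : x ∈ K
    · rw [Set.indicator_of_mem hx]
      simp only [Pi.sub_apply]
      rw [Real.norm_of_nonneg hη0.le]
      rw [← dist_eq_norm, dist_comm]
      exact hclose x
    · rw [Set.indicator_of_notMem hx]
      have hg0 : g x = 0 := Function.notMem_support.mp (fun hc => hx (hgsubK hc))
      have hh0 : h x = 0 := Function.notMem_support.mp (fun hc => hx (hsubK hc))
      simp [hg0, hh0]
  -- L² bound on g - h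
  have hgh : eLpNorm (g - h) 2 volume ≤ ENNReal.ofReal (ε/2) := by
    calc eLpNorm (g - h) 2 volume ≤ eLpNorm (K.indicator (fun _ => η)) 2 volume :=
          eLpNorm_mono hpt
      _ = ‖η‖₊ * (volume K) ^ (1/(2:ℝ)) := by
          rw [eLpNorm_indicator_const hKcomp.isClosed.measurableSet (by norm_num) (by norm_num)]
          norm_num
          rfl
      _ ≤ ENNReal.ofReal (ε/2) := by
          rw [← hc]
          have h1 : (‖η‖₊ : ENNReal) = ENNReal.ofReal η := by
            rw [← Real.enorm_eq_ofReal hη0.le]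
            rfl
          rw [h1, ← ENNReal.ofReal_toReal hcne, ← ENNReal.ofReal_mul hη0.le]
          apply ENNReal.ofReal_le_ofReal
          rw [hη]
          rw [div_mul_eq_mul_div, div_le_iff₀ (by positivity)]
          have := ENNReal.toReal_nonneg (a := c)
          nlinarith
  -- the Schwartz approximant
  refine ⟨schwartzOfCS h hsmooth hsupp, ?_⟩
  have hcoe2 : ⇑(toL2 (schwartzOfCS h hsmooth hsupp)) =ᵐ[volume] h :=
    MemLp.coeFn_toLp (schwartz_memL2 (schwartzOfCS h hsmooth hsupp))
  have hcoe : ⇑(f - toL2 (schwartzOfCS h hsmooth hsupp)) =ᵐ[volume] ⇑f - h := by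
    filter_upwards [Lp.coeFn_sub f (toL2 (schwartzOfCS h hsmooth hsupp)), hcoe2] with x h1 h2
    simp only [h1, Pi.sub_apply, h2]
  rw [Lp.norm_def, eLpNorm_congr_ae hcoe]
  have htri : eLpNorm (⇑f - h) 2 volume ≤ ENNReal.ofReal (ε/2) + ENNReal.ofReal (ε/2) := by
    have hdecomp : ⇑f - h = (⇑f - g) + (g - h) := by ext x; simp
    rw [hdecomp]
    refine le_trans (eLpNorm_add_le (hf2.1.sub gcont.aestronglyMeasurable)
      (gcont.aestronglyMeasurable.sub (hsmooth.continuous.aestronglyMeasurable))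
      (by norm_num)) ?_
    exact add_le_add hfg hgh
  rw [← ENNReal.ofReal_add (by linarith) (by linarith)] at htri
  have : ε/2 + ε/2 = ε := by ring
  rw [this] at htri
  exact ENNReal.toReal_le_of_le_ofReal hε.le htri

lemma denseRange_toL2 {N : ℕ} : DenseRange (toL2 (N := N)) := by
  rw [Metric.denseRange_iff]
  intro x r hr
  obtain ⟨ψ, hψ⟩ := exists_schwartz_close x (half_pos hr)
  exact ⟨ψ, lt_of_le_of_lt (by rw [dist_eq_norm]; exact hψ) (half_lt_self hr)⟩

lemma toL2_smul {N : ℕ} (c : ℂ) (f : 𝓢(Cfg N, ℂ)) : toL2 (c • f) = c • toL2 f := by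
  unfold toL2
  rw [← MemLp.toLp_const_smul c (schwartz_memL2 f)]
  rfl

lemma opNorm_le_of_schwartz {N : ℕ} (hd : DenseRange (toL2 (N := N)))
    (A : L2 N →L[ℂ] L2 N) {ε : ℝ} (hε : 0 ≤ ε)
    (h : ∀ ψ φ : 𝓢(Cfg N, ℂ), ‖toL2 ψ‖ ≤ 1 → ‖toL2 φ‖ ≤ 1 →
      ‖(inner ℂ (toL2 ψ) (A (toL2 φ)) : ℂ)‖ ≤ ε) : ‖A‖ ≤ ε := by
  -- Step A : bound for all Schwartz functions (no normalization)
  have stepA : ∀ ψ φ : 𝓢(Cfg N, ℂ),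
      ‖(inner ℂ (toL2 ψ) (A (toL2 φ)) : ℂ)‖ ≤ ε * ‖toL2 ψ‖ * ‖toL2 φ‖ := by
    intro ψ φ
    rcases eq_or_ne (‖toL2 ψ‖) 0 with ha | ha
    · rw [norm_eq_zero.mp ha, inner_zero_left, norm_zero]
      positivity
    rcases eq_or_ne (‖toL2 φ‖) 0 with hb | hb
    · rw [norm_eq_zero.mp hb, map_zero, inner_zero_right, norm_zero]
      positivity
    have ha' : (0:ℝ) < ‖toL2 ψ‖ := lt_of_le_of_ne (norm_nonneg _) (Ne.symm ha)
    have hb' : (0:ℝ) < ‖toL2 φ‖ := lt_of_le_of_ne (norm_nonneg _) (Ne.symm hb)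
    set a := ‖toL2 ψ‖ with hadef
    set b := ‖toL2 φ‖ with hbdef
    have hna : ‖toL2 (((a⁻¹ : ℝ) : ℂ) • ψ)‖ ≤ 1 := by
      rw [toL2_smul, norm_smul]
      simp only [Complex.norm_real, norm_inv, Real.norm_eq_abs, abs_of_pos ha']
      rw [inv_mul_cancel₀ ha]
    have hnb : ‖toL2 (((b⁻¹ : ℝ) : ℂ) • φ)‖ ≤ 1 := by
      rw [toL2_smul, norm_smul]
      simp only [Complex.norm_real, norm_inv, Real.norm_eq_abs, abs_of_pos hb']
      rw [inv_mul_cancel₀ hb]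
    have key := h (((a⁻¹ : ℝ) : ℂ) • ψ) (((b⁻¹ : ℝ) : ℂ) • φ) hna hnb
    rw [toL2_smul, toL2_smul, ContinuousLinearMap.map_smul, inner_smul_left,
      inner_smul_right, norm_mul, norm_mul, RCLike.norm_conj] at key
    simp only [Complex.norm_real, norm_inv, Real.norm_eq_abs, abs_of_pos ha',
      abs_of_pos hb'] at key
    have h2 : a * (b * (a⁻¹ * (b⁻¹ * ‖(inner ℂ (toL2 ψ) (A (toL2 φ)) : ℂ)‖))) ≤ a * (b * ε) := by
      apply mul_le_mul_of_nonneg_left _ ha'.le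
      exact mul_le_mul_of_nonneg_left key hb'.le
    calc ‖(inner ℂ (toL2 ψ) (A (toL2 φ)) : ℂ)‖
        = a * (b * (a⁻¹ * (b⁻¹ * ‖(inner ℂ (toL2 ψ) (A (toL2 φ)) : ℂ)‖))) := by
          field_simp
      _ ≤ a * (b * ε) := h2
      _ = ε * a * b := by ring
  -- Step B : extend to all of L².
  have stepB : ∀ x y : L2 N, ‖(inner ℂ x (A y) : ℂ)‖ ≤ ε * ‖x‖ * ‖y‖ := by
    intro x y
    refine hd.induction_on₂ ?_ stepA x y
    apply isClosed_le
    · exact (continuous_fst.inner (A.continuous.comp continuous_snd)).norm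
    · fun_prop
  -- conclude
  refine A.opNorm_le_bound hε fun y => ?_
  have h1 := stepB (A y) y
  rw [inner_self_eq_norm_sq_to_K] at h1
  rcases eq_or_lt_of_le (norm_nonneg (A y)) with hz | hz
  · rw [← hz]; positivity
  · have h2 : ‖A y‖ * ‖A y‖ ≤ (ε * ‖y‖) * ‖A y‖ := by
      calc ‖A y‖ * ‖A y‖ = ‖((‖A y‖ : ℂ)) ^ 2‖ := by
            rw [norm_pow, Complex.norm_real, Real.norm_of_nonneg (norm_nonneg _), sq]
        _ ≤ ε * ‖A y‖ * ‖y‖ := h1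
        _ = (ε * ‖y‖) * ‖A y‖ := by ring
    exact le_of_mul_le_mul_right h2 hz

/-- The position operator Q_i (multiplication by the i-th coordinate). -/
def Qop {N : ℕ} (i : Fin N) (f : 𝓢(Cfg N, ℂ)) : 𝓢(Cfg N, ℂ) :=
  SchwartzMap.bilinLeftCLM ((ContinuousLinearMap.lsmul ℝ ℝ : ℝ →L[ℝ] ℂ →L[ℝ] ℂ).flip)
    ((EuclideanSpace.proj i : Cfg N →L[ℝ] ℝ).hasTemperateGrowth) f

/-- The momentum operator P_i = -i ∂/∂q_i. -/
def Pop {N : ℕ} (i : Fin N) (f : 𝓢(Cfg N, ℂ)) : 𝓢(Cfg N, ℂ) :=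
  (-Complex.I) • (LineDeriv.lineDerivOpCLM ℝ 𝓢(Cfg N, ℂ) (EuclideanSpace.single i (1:ℝ)) f)

/-- `opPow A α` is the operator `A₁^{α₁} ∘ ⋯ ∘ A_N^{α_N}`. -/
def opPow {σ : Type*} {N : ℕ} (A : Fin N → σ → σ) (α : Fin N → ℕ) : σ → σ :=
  (List.ofFn fun i => (A i)^[α i]).foldr (· ∘ ·) id

/-- `Q^α P^β` acting on Schwartz functions. -/
def QP {N : ℕ} (α β : Fin N → ℕ) (f : 𝓢(Cfg N, ℂ)) : 𝓢(Cfg N, ℂ) :=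
  opPow Qop α (opPow Pop β f)

/-- `P^β Q^α` acting on Schwartz functions. -/
def PQ {N : ℕ} (β α : Fin N → ℕ) (f : 𝓢(Cfg N, ℂ)) : 𝓢(Cfg N, ℂ) :=
  opPow Pop β (opPow Qop α f)

lemma foldr_id_of_mem {σ : Type*} (l : List (σ → σ)) (h : ∀ f ∈ l, f = id) (x : σ) :
    l.foldr (· ∘ ·) id x = x := by
  induction l with
  | nil => rfl
  | cons a t ih =>
    simp only [List.foldr_cons, Function.comp_apply,
      ih (fun f hf => h f (List.mem_cons_of_mem a hf))]
    rw [h a (List.mem_cons_self)]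
    rfl

lemma opPow_zero {σ : Type*} {N : ℕ} (A : Fin N → σ → σ) (x : σ) : opPow A 0 x = x := by
  apply foldr_id_of_mem
  intro f hf
  simp only [List.mem_ofFn] at hf
  obtain ⟨i, rfl⟩ := hf
  rfl


lemma PQ_zero {N : ℕ} (f : 𝓢(Cfg N, ℂ)) : PQ 0 0 f = f := by
  unfold PQ
  rw [opPow_zero, opPow_zero]

/-- The set of values `|⟨P^β Q^α ψ, T P^{β'} Q^{α'} φ⟩|` over normalized Schwartz `ψ, φ`. -/
def schwartzOpSet {N : ℕ} (T : L2 N →L[ℂ] L2 N) (α α' β β' : Fin N → ℕ) : Set ℝ :=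
  { r | ∃ ψ φ : 𝓢(Cfg N, ℂ), ‖toL2 ψ‖ ≤ 1 ∧ ‖toL2 φ‖ ≤ 1 ∧
      r = ‖(inner ℂ (toL2 (PQ β α ψ)) (T (toL2 (PQ β' α' φ))) : ℂ)‖ }

/-- The seminorm `‖T‖_{α,α',β,β'}` (as a supremum). -/
def opSeminorm {N : ℕ} (T : L2 N →L[ℂ] L2 N) (α α' β β' : Fin N → ℕ) : ℝ :=
  sSup (schwartzOpSet T α α' β β')

/-- A bounded operator on L²(ℝ^N) is a Schwartz operator if all the quantities
`‖T‖_{α,α',β,β'}` are finite. -/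
def IsSchwartzOp {N : ℕ} (T : L2 N →L[ℂ] L2 N) : Prop :=
  ∀ α α' β β' : Fin N → ℕ, BddAbove (schwartzOpSet T α α' β β')

/-- The space of Schwartz operators is complete: every sequence of Schwartz operators which is
Cauchy with respect to all the seminorms `‖·‖_{α,α',β,β'}` converges, in all these seminorms,
to a Schwartz operator. -/
theorem schwartzOp_complete {N : ℕ} (T : ℕ → (L2 N →L[ℂ] L2 N))
    (hS : ∀ n, IsSchwartzOp (T n))
    (hC : ∀ (α α' β β' : Fin N → ℕ) (ε : ℝ), 0 < ε → ∃ M : ℕ, ∀ m n : ℕ, M ≤ m → M ≤ n →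
      ∀ r ∈ schwartzOpSet (T m - T n) α α' β β', r ≤ ε) :
    ∃ L : L2 N →L[ℂ] L2 N, IsSchwartzOp L ∧
      ∀ (α α' β β' : Fin N → ℕ) (ε : ℝ), 0 < ε → ∃ M : ℕ, ∀ n : ℕ, M ≤ n →
        ∀ r ∈ schwartzOpSet (L - T n) α α' β β', r ≤ ε := by
  -- The sequence is Cauchy in operator norm.
  have hcauchy : CauchySeq T := by
    rw [Metric.cauchySeq_iff]
    intro ε hε
    obtain ⟨M, hM⟩ := hC 0 0 0 0 (ε/2) (half_pos hε)
    refine ⟨M, fun m hm n hn => ?_⟩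
    rw [dist_eq_norm]
    have hb : ‖T m - T n‖ ≤ ε/2 := by
      apply opNorm_le_of_schwartz denseRange_toL2 _ (half_pos hε).le
      intro ψ φ hψ hφ
      exact hM m n hm hn _ ⟨ψ, φ, hψ, hφ, by rw [PQ_zero, PQ_zero]⟩
    linarith
  obtain ⟨L, hL⟩ := cauchySeq_tendsto_of_complete hcauchy
  have key : ∀ (α α' β β' : Fin N → ℕ) (ε : ℝ), 0 < ε → ∃ M : ℕ, ∀ n : ℕ, M ≤ n →
      ∀ r ∈ schwartzOpSet (L - T n) α α' β β', r ≤ ε := by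
    intro α α' β β' ε hε
    obtain ⟨M, hM⟩ := hC α α' β β' (ε/2) (half_pos hε)
    refine ⟨M, fun n hn r hr => ?_⟩
    obtain ⟨ψ, φ, hψ, hφ, rfl⟩ := hr
    set u := toL2 (PQ β α ψ) with hu
    set v := toL2 (PQ β' α' φ) with hv
    have hcont : Continuous fun W : L2 N →L[ℂ] L2 N => ‖(inner ℂ u ((W - T n) v) : ℂ)‖ := by
      apply Continuous.norm
      apply Continuous.inner continuous_const
      simp only [ContinuousLinearMap.sub_apply]
      exact ((ContinuousLinearMap.apply ℂ (L2 N) v).continuous).sub continuous_const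
    have htend : Filter.Tendsto (fun m => ‖(inner ℂ u ((T m - T n) v) : ℂ)‖) Filter.atTop
        (nhds ‖(inner ℂ u ((L - T n) v) : ℂ)‖) := (hcont.tendsto L).comp hL
    have hbound : ∀ᶠ m in Filter.atTop, ‖(inner ℂ u ((T m - T n) v) : ℂ)‖ ≤ ε/2 := by
      filter_upwards [Filter.eventually_ge_atTop M] with m hm
      exact hM m n hm hn _ ⟨ψ, φ, hψ, hφ, rfl⟩
    have := le_of_tendsto htend hbound
    linarith
  refine ⟨L, ?_, key⟩
  intro α α' β β'
  obtain ⟨M, hM⟩ := key α α' β β' 1 one_pos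
  obtain ⟨C, hC'⟩ := hS M α α' β β'
  refine ⟨1 + C, fun r hr => ?_⟩
  obtain ⟨ψ, φ, hψ, hφ, rfl⟩ := hr
  have h1 : ‖(inner ℂ (toL2 (PQ β α ψ)) ((L - T M) (toL2 (PQ β' α' φ))) : ℂ)‖ ≤ 1 :=
    hM M le_rfl _ ⟨ψ, φ, hψ, hφ, rfl⟩
  have h2 : ‖(inner ℂ (toL2 (PQ β α ψ)) ((T M) (toL2 (PQ β' α' φ))) : ℂ)‖ ≤ C :=
    hC' ⟨ψ, φ, hψ, hφ, rfl⟩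
  have hsplit : (inner ℂ (toL2 (PQ β α ψ)) (L (toL2 (PQ β' α' φ))) : ℂ)
      = (inner ℂ (toL2 (PQ β α ψ)) ((L - T M) (toL2 (PQ β' α' φ))) : ℂ)
        + (inner ℂ (toL2 (PQ β α ψ)) ((T M) (toL2 (PQ β' α' φ))) : ℂ) := by
    rw [← inner_add_right]
    congr 1
    simp
  rw [hsplit]
  exact (norm_add_le _ _).trans (add_le_add h1 h2)


end
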